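/- Let F₁, F₂ : ℝⁿ → ℝ be twice continuously differentiable convex functions such that F₂(x) → +∞ as ‖x‖ → +∞ and F₁(x) ≤ F₂(x) for all x ∈ ℝⁿ. Then ∫_{ℝⁿ} det(D²F₁(x)) dx ≤ ∫_{ℝⁿ} det(D²F₂(x)) dx, where both integrals of the nonnegative integrands are taken with respect to Lebesgue measure and take values in [0, +∞]. -/

import Mathlib

open MeasureTheory Filter Topology RealInnerProductSpace

namespace TotalMAAux

variable {n : ℕ}

noncomputable def Mmat (F : EuclideanSpace ℝ (Fin n) → ℝ) (x : EuclideanSpace ℝ (Fin n)) :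
    Matrix (Fin n) (Fin n) ℝ :=
  Matrix.of fun i j =>
    iteratedFDeriv ℝ 2 F x ![EuclideanSpace.single i 1, EuclideanSpace.single j 1]

theorem Mmat_eq (F : EuclideanSpace ℝ (Fin n) → ℝ) (x : EuclideanSpace ℝ (Fin n)) (i j : Fin n) :
    Mmat F x i j
      = fderiv ℝ (fderiv ℝ F) x (EuclideanSpace.single i 1) (EuclideanSpace.single j 1) := by
  rw [Mmat, Matrix.of_apply, iteratedFDeriv_two_apply]
  simp

theorem vec_decomp (v : EuclideanSpace ℝ (Fin n)) :
    v = ∑ i, v i • EuclideanSpace.single i 1 := by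
  ext j
  rw [show (∑ i, v i • EuclideanSpace.single i 1 : EuclideanSpace ℝ (Fin n)) j
      = ∑ i, (v i • EuclideanSpace.single i 1 : EuclideanSpace ℝ (Fin n)) j from
    by rw [WithLp.ofLp_sum, Finset.sum_apply]]
  simp [EuclideanSpace.single_apply]

theorem quadform (F : EuclideanSpace ℝ (Fin n) → ℝ) (x : EuclideanSpace ℝ (Fin n))
    (c : Fin n → ℝ) :
    dotProduct c ((Mmat F x).mulVec c)
      = fderiv ℝ (fderiv ℝ F) x (∑ i, c i • EuclideanSpace.single i 1)
          (∑ j, c j • EuclideanSpace.single j 1) := by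
  rw [map_sum]
  simp only [_root_.map_smul, ContinuousLinearMap.coe_sum', ContinuousLinearMap.coe_smul',
    Finset.sum_apply, Pi.smul_apply, map_sum, _root_.map_smul, smul_eq_mul]
  simp only [dotProduct, Matrix.mulVec, Finset.mul_sum]
  rw [Finset.sum_comm]
  refine Finset.sum_congr rfl fun j _ => Finset.sum_congr rfl fun i _ => ?_
  rw [Mmat_eq]
  ring

theorem Mmat_symm (F : EuclideanSpace ℝ (Fin n) → ℝ) (hF : ContDiff ℝ 2 F)
    (x : EuclideanSpace ℝ (Fin n)) : (Mmat F x).IsHermitian := by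
  have hs : IsSymmSndFDerivAt ℝ F x := hF.contDiffAt.isSymmSndFDerivAt (by simp [minSmoothness_of_isRCLikeNormedField])
  ext i j
  simp only [Matrix.conjTranspose_apply, star_trivial, Mmat_eq]
  exact hs _ _

/-- Derivative along a line. -/
theorem hasDerivAt_line (F : EuclideanSpace ℝ (Fin n) → ℝ) (hF : Differentiable ℝ F)
    (x v : EuclideanSpace ℝ (Fin n)) (t₀ : ℝ) :
    HasDerivAt (fun t : ℝ => F (x + t • v)) (fderiv ℝ F (x + t₀ • v) v) t₀ := by
  have hline : HasDerivAt (fun t : ℝ => x + t • v) v t₀ := by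
    simpa using ((hasDerivAt_id t₀).smul_const v).const_add x
  exact (hF _).hasFDerivAt.comp_hasDerivAt t₀ hline

/-- Derivative of the directional derivative along a line. -/
theorem hasDerivAt_dirDeriv (F : EuclideanSpace ℝ (Fin n) → ℝ) (hF : ContDiff ℝ 2 F)
    (x v w : EuclideanSpace ℝ (Fin n)) (t₀ : ℝ) :
    HasDerivAt (fun t : ℝ => fderiv ℝ F (x + t • v) w)
      (fderiv ℝ (fderiv ℝ F) (x + t₀ • v) v w) t₀ := by
  have hline : HasDerivAt (fun t : ℝ => x + t • v) v t₀ := by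
    simpa using ((hasDerivAt_id t₀).smul_const v).const_add x
  have hd : Differentiable ℝ (fderiv ℝ F) :=
    (hF.fderiv_right (m := 1) (by norm_num)).differentiable (by norm_num)
  have h2 : HasDerivAt (fun t : ℝ => fderiv ℝ F (x + t • v))
      (fderiv ℝ (fderiv ℝ F) (x + t₀ • v) v) t₀ :=
    (hd _).hasFDerivAt.comp_hasDerivAt t₀ hline
  simpa using h2.clm_apply (hasDerivAt_const t₀ w)

theorem line_convex (F : EuclideanSpace ℝ (Fin n) → ℝ) (hc : ConvexOn ℝ Set.univ F)
    (x v : EuclideanSpace ℝ (Fin n)) :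
    ConvexOn ℝ Set.univ (fun t : ℝ => F (x + t • v)) := by
  have h := hc.comp_affineMap (AffineMap.lineMap x (x + v))
  have he : ∀ t : ℝ, (AffineMap.lineMap x (x + v)) t = x + t • v := by
    intro t; simp [AffineMap.lineMap_apply]; abel
  have hf : (F ∘ ⇑(AffineMap.lineMap x (x + v))) = fun t : ℝ => F (x + t • v) := by
    funext t; rw [Function.comp_apply, he]
  rw [hf, Set.preimage_univ] at h
  exact h

theorem phi_mono (F : EuclideanSpace ℝ (Fin n) → ℝ) (hF : ContDiff ℝ 2 F)
    (hc : ConvexOn ℝ Set.univ F) (x v : EuclideanSpace ℝ (Fin n)) :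
    Monotone (fun t : ℝ => fderiv ℝ F (x + t • v) v) := by
  have hd : Differentiable ℝ F := hF.differentiable (by norm_num)
  have hφ : ∀ t : ℝ, HasDerivAt (fun s : ℝ => F (x + s • v)) (fderiv ℝ F (x + t • v) v) t :=
    fun t => hasDerivAt_line F hd x v t
  have h := (line_convex F hc x v).monotoneOn_deriv (fun t _ => (hφ t).differentiableAt)
  intro a b hab
  have h2 := h (Set.mem_univ a) (Set.mem_univ b) hab
  rwa [(hφ a).deriv, (hφ b).deriv] at h2

theorem nonneg_of_monotone_hasDerivAt (φ : ℝ → ℝ) (hφ : Monotone φ) (d t₀ : ℝ)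
    (hd : HasDerivAt φ d t₀) : 0 ≤ d := by
  have h := hasDerivAt_iff_tendsto_slope.1 hd
  have h' : Tendsto (slope φ t₀) (𝓝[>] t₀) (𝓝 d) :=
    h.mono_left (nhdsWithin_mono _ (fun y hy => ne_of_gt hy))
  refine ge_of_tendsto h' ?_
  filter_upwards [self_mem_nhdsWithin] with y hy
  rw [Set.mem_Ioi] at hy
  rw [slope_def_field]
  exact div_nonneg (by simpa using hφ hy.le) (by linarith)

theorem zero_of_monotone_eq (φ : ℝ → ℝ) (hφ : Monotone φ) (h01 : φ 1 = φ 0) (d : ℝ)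
    (hd : HasDerivAt φ d 0) : d = 0 := by
  have hconst : ∀ t ∈ Set.Ioo (0:ℝ) 1, φ t = φ 0 := fun t ht =>
    le_antisymm (h01 ▸ hφ ht.2.le) (hφ ht.1.le)
  have h := hasDerivAt_iff_tendsto_slope.1 hd
  have h' : Tendsto (slope φ 0) (𝓝[>] (0:ℝ)) (𝓝 d) :=
    h.mono_left (nhdsWithin_mono _ (fun y hy => ne_of_gt hy))
  have h0 : Tendsto (slope φ 0) (𝓝[>] (0:ℝ)) (𝓝 0) := by
    have he : ∀ᶠ y in 𝓝[>] (0:ℝ), slope φ 0 y = 0 := by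
      filter_upwards [Ioo_mem_nhdsGT_of_mem (by norm_num : (0:ℝ) ∈ Set.Ico 0 1)] with y hy
      rw [slope_def_field, hconst y hy, sub_self, zero_div]
    exact Tendsto.congr' (he.mono fun y hy => hy.symm) tendsto_const_nhds
  exact tendsto_nhds_unique h' h0

theorem snd_nonneg (F : EuclideanSpace ℝ (Fin n) → ℝ) (hF : ContDiff ℝ 2 F)
    (hc : ConvexOn ℝ Set.univ F) (x v : EuclideanSpace ℝ (Fin n)) :
    0 ≤ fderiv ℝ (fderiv ℝ F) x v v := by
  have hd : HasDerivAt (fun t : ℝ => fderiv ℝ F (x + t • v) v)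
      (fderiv ℝ (fderiv ℝ F) x v v) 0 := by
    simpa using hasDerivAt_dirDeriv F hF x v v 0
  exact nonneg_of_monotone_hasDerivAt _ (phi_mono F hF hc x v) _ 0 hd

theorem Mmat_psd (F : EuclideanSpace ℝ (Fin n) → ℝ) (hF : ContDiff ℝ 2 F)
    (hc : ConvexOn ℝ Set.univ F) (x : EuclideanSpace ℝ (Fin n)) :
    (Mmat F x).PosSemidef := by
  refine Matrix.PosSemidef.of_dotProduct_mulVec_nonneg (Mmat_symm F hF x) fun c => ?_
  have hsc : star c = c := by
    funext i; simp
  rw [hsc]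
  rw [show dotProduct c ((Mmat F x).mulVec c)
      = fderiv ℝ (fderiv ℝ F) x (∑ i, c i • EuclideanSpace.single i 1)
          (∑ j, c j • EuclideanSpace.single j 1) from quadform F x c]
  exact snd_nonneg F hF hc x _

theorem Mmat_det_nonneg (F : EuclideanSpace ℝ (Fin n) → ℝ) (hF : ContDiff ℝ 2 F)
    (hc : ConvexOn ℝ Set.univ F) (x : EuclideanSpace ℝ (Fin n)) :
    0 ≤ (Mmat F x).det := by
  have hpsd := Mmat_psd F hF hc x
  rw [hpsd.isHermitian.det_eq_prod_eigenvalues]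
  exact Finset.prod_nonneg fun i _ => hpsd.eigenvalues_nonneg i

theorem snd_pos (F : EuclideanSpace ℝ (Fin n) → ℝ) (hF : ContDiff ℝ 2 F)
    (hc : ConvexOn ℝ Set.univ F) (x : EuclideanSpace ℝ (Fin n))
    (hdet : 0 < (Mmat F x).det) (v : EuclideanSpace ℝ (Fin n)) (hv : v ≠ 0) :
    0 < fderiv ℝ (fderiv ℝ F) x v v := by
  have hpsd := Mmat_psd F hF hc x
  set c : Fin n → ℝ := fun i => v i with hcdef
  have hc0 : c ≠ 0 := by
    intro h
    apply hv
    ext j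
    have : c j = 0 := by rw [h]; rfl
    simpa [hcdef] using this
  have hq : dotProduct c ((Mmat F x).mulVec c) = fderiv ℝ (fderiv ℝ F) x v v := by
    rw [quadform]
    rw [show (∑ i, c i • EuclideanSpace.single i 1 : EuclideanSpace ℝ (Fin n)) = v from
      (vec_decomp v).symm]
  have hnn : 0 ≤ dotProduct c ((Mmat F x).mulVec c) := by
    have := hpsd.dotProduct_mulVec_nonneg c
    have hsc : star c = c := by funext i; simp
    rwa [hsc] at this
  rcases lt_or_eq_of_le hnn with h | h
  · rwa [hq] at h
  · exfalso
    have hmv : (Mmat F x).mulVec c = 0 := by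
      rw [← hpsd.dotProduct_mulVec_zero_iff c]
      have hsc : star c = c := by funext i; simp
      rw [hsc]
      exact h.symm
    have : (Mmat F x).det = 0 := Matrix.exists_mulVec_eq_zero_iff.mp ⟨c, hc0, hmv⟩
    exact absurd this (ne_of_gt hdet)

noncomputable def gradMap (F : EuclideanSpace ℝ (Fin n) → ℝ) (x : EuclideanSpace ℝ (Fin n)) :
    EuclideanSpace ℝ (Fin n) :=
  (InnerProductSpace.toDual ℝ (EuclideanSpace ℝ (Fin n))).symm (fderiv ℝ F x)

noncomputable def gradDeriv (F : EuclideanSpace ℝ (Fin n) → ℝ) (x : EuclideanSpace ℝ (Fin n)) :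
    EuclideanSpace ℝ (Fin n) →L[ℝ] EuclideanSpace ℝ (Fin n) :=
  ((InnerProductSpace.toDual ℝ
    (EuclideanSpace ℝ (Fin n))).symm.toContinuousLinearEquiv.toContinuousLinearMap).comp
    (fderiv ℝ (fderiv ℝ F) x)

theorem gradMap_hasFDerivAt (F : EuclideanSpace ℝ (Fin n) → ℝ) (hF : ContDiff ℝ 2 F)
    (x : EuclideanSpace ℝ (Fin n)) : HasFDerivAt (gradMap F) (gradDeriv F x) x := by
  have hd : Differentiable ℝ (fderiv ℝ F) :=
    (hF.fderiv_right (m := 1) (by norm_num)).differentiable (by norm_num)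
  exact (((InnerProductSpace.toDual ℝ
    (EuclideanSpace ℝ (Fin n))).symm.toContinuousLinearEquiv.toContinuousLinearMap).hasFDerivAt).comp
    x (hd x).hasFDerivAt

theorem gradDeriv_det (F : EuclideanSpace ℝ (Fin n) → ℝ) (x : EuclideanSpace ℝ (Fin n)) :
    (gradDeriv F x).det = (Mmat F x).det := by
  set b := (EuclideanSpace.basisFun (Fin n) ℝ).toBasis with hb
  have hmat : LinearMap.toMatrix b b (gradDeriv F x : EuclideanSpace ℝ (Fin n) →ₗ[ℝ]
      EuclideanSpace ℝ (Fin n)) = (Mmat F x).transpose := by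
    ext i j
    rw [LinearMap.toMatrix_apply]
    have hbj : b j = EuclideanSpace.single j 1 := by
      simp [hb, EuclideanSpace.basisFun_apply]
    rw [hbj]
    rw [OrthonormalBasis.coe_toBasis_repr_apply, EuclideanSpace.basisFun_repr]
    show (gradDeriv F x (EuclideanSpace.single j 1)) i = _
    rw [Matrix.transpose_apply, Mmat_eq]
    have hcoord : ∀ w : EuclideanSpace ℝ (Fin n),
        w i = (inner ℝ w (EuclideanSpace.single i (1:ℝ)) : ℝ) := by
      intro w
      rw [EuclideanSpace.inner_single_right]
      simp
    show ((InnerProductSpace.toDual ℝ (EuclideanSpace ℝ (Fin n))).symm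
      ((fderiv ℝ (fderiv ℝ F) x) (EuclideanSpace.single j 1))) i = _
    rw [hcoord ((InnerProductSpace.toDual ℝ (EuclideanSpace ℝ (Fin n))).symm
      ((fderiv ℝ (fderiv ℝ F) x) (EuclideanSpace.single j 1))),
      InnerProductSpace.toDual_symm_apply]
  rw [ContinuousLinearMap.det, ← LinearMap.det_toMatrix b, hmat, Matrix.det_transpose]

theorem Mmat_det_continuous (F : EuclideanSpace ℝ (Fin n) → ℝ) (hF : ContDiff ℝ 2 F) :
    Continuous fun x : EuclideanSpace ℝ (Fin n) => (Mmat F x).det := by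
  refine Continuous.matrix_det ?_
  refine continuous_matrix fun i j => ?_
  have h := hF.continuous_iteratedFDeriv (le_refl 2)
  exact (continuous_eval_const _).comp h

/-- Tangent line lies below a convex differentiable function. -/
theorem tangent_le (F : EuclideanSpace ℝ (Fin n) → ℝ) (hF : ContDiff ℝ 2 F)
    (hc : ConvexOn ℝ Set.univ F) (x₀ x : EuclideanSpace ℝ (Fin n)) :
    F x₀ + fderiv ℝ F x₀ (x - x₀) ≤ F x := by
  have hd : Differentiable ℝ F := hF.differentiable (by norm_num)
  set v := x - x₀ with hv
  have hconv := line_convex F hc x₀ v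
  have hder : HasDerivAt (fun t : ℝ => F (x₀ + t • v)) (fderiv ℝ F x₀ v) 0 := by
    simpa using hasDerivAt_line F hd x₀ v 0
  have := hconv.le_slope_of_hasDerivAt (Set.mem_univ 0) (Set.mem_univ 1) one_pos hder
  rw [slope_def_field] at this
  simp only [one_smul, zero_smul, add_zero, sub_zero, div_one] at this
  have hx : x₀ + v = x := by rw [hv]; abel
  rw [hx] at this
  linarith

/-- Injectivity of the gradient map on the set where the Hessian determinant is positive. -/
theorem grad_injOn (F : EuclideanSpace ℝ (Fin n) → ℝ) (hF : ContDiff ℝ 2 F)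
    (hc : ConvexOn ℝ Set.univ F) :
    Set.InjOn (gradMap F) {x | 0 < (Mmat F x).det} := by
  intro x hx y hy hxy
  by_contra hne
  have hfd : fderiv ℝ F x = fderiv ℝ F y :=
    (InnerProductSpace.toDual ℝ (EuclideanSpace ℝ (Fin n))).symm.injective hxy
  set v := y - x with hv
  have hvne : v ≠ 0 := sub_ne_zero.mpr (Ne.symm hne)
  set φ : ℝ → ℝ := fun t => fderiv ℝ F (x + t • v) v with hφdef
  have hmono : Monotone φ := phi_mono F hF hc x v
  have h01 : φ 1 = φ 0 := by
    simp only [hφdef, one_smul, zero_smul, add_zero]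
    have : x + v = y := by rw [hv]; abel
    rw [this, ← hfd]
  have hd : HasDerivAt φ (fderiv ℝ (fderiv ℝ F) x v v) 0 := by
    simpa [hφdef] using hasDerivAt_dirDeriv F hF x v v 0
  have hz := zero_of_monotone_eq φ hmono h01 _ hd
  have hpos := snd_pos F hF hc x hx v hvne
  rw [hz] at hpos
  exact lt_irrefl 0 hpos


set_option maxHeartbeats 1000000 in
/-- If the Hessian of `F₁` at `x₀` is positive definite and `F₁ ≤ F₂` with `F₂` continuous,
then the value `fderiv ℝ F₁ x₀` is attained as a derivative of `F₂`. -/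
theorem reach (hn : 0 < n) (F₁ F₂ : EuclideanSpace ℝ (Fin n) → ℝ)
    (h1 : ContDiff ℝ 2 F₁) (h2 : ContDiff ℝ 2 F₂)
    (hc1 : ConvexOn ℝ Set.univ F₁) (hle : ∀ x, F₁ x ≤ F₂ x)
    (x₀ : EuclideanSpace ℝ (Fin n)) (hdet : 0 < (Mmat F₁ x₀).det) :
    ∃ y, fderiv ℝ F₂ y = fderiv ℝ F₁ x₀ := by
  classical
  set ℓ := fderiv ℝ F₁ x₀ with hℓdef
  have hd1 : Differentiable ℝ F₁ := h1.differentiable (by norm_num)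
  set B := fderiv ℝ (fderiv ℝ F₁) with hBdef
  -- positive definiteness gives a uniform lower bound on the unit sphere
  have hsph : (Metric.sphere (0 : EuclideanSpace ℝ (Fin n)) 1).Nonempty := by
    refine ⟨EuclideanSpace.single ⟨0, hn⟩ 1, ?_⟩
    simp [EuclideanSpace.norm_single]
  have hqcont : Continuous fun v : EuclideanSpace ℝ (Fin n) => B x₀ v v :=
    ((B x₀).continuous).clm_apply continuous_id
  obtain ⟨u₀, hu₀mem, hu₀min⟩ :=
    (isCompact_sphere (0 : EuclideanSpace ℝ (Fin n)) 1).exists_isMinOn hsph hqcont.continuousOn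
  set lam := B x₀ u₀ u₀ with hlamdef
  have hu₀ : ‖u₀‖ = 1 := by simpa using hu₀mem
  have hlampos : 0 < lam := by
    refine snd_pos F₁ h1 hc1 x₀ hdet u₀ ?_
    intro h
    rw [h] at hu₀
    simp at hu₀
  have hmin : ∀ u : EuclideanSpace ℝ (Fin n), ‖u‖ = 1 → lam ≤ B x₀ u u := by
    intro u hu
    exact hu₀min (by simpa using hu)
  -- continuity of the second derivative gives a ball on which the Hessian is ≥ lam/2
  have hBc : Continuous B := by
    rw [hBdef]
    exact (h1.fderiv_right (m := 1) (by norm_num)).continuous_fderiv (by norm_num)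
  rcases (Metric.continuousAt_iff (f := B) (a := x₀)).mp hBc.continuousAt (lam/2) (by linarith) with ⟨δ, hδpos, hδ⟩
  set r := δ/2 with hrdef
  have hrpos : 0 < r := by positivity
  have hball : ∀ z : EuclideanSpace ℝ (Fin n), dist z x₀ ≤ r →
      ∀ u : EuclideanSpace ℝ (Fin n), ‖u‖ = 1 → lam/2 ≤ B z u u := by
    intro z hz u hu
    have hdz : dist (B z) (B x₀) < lam/2 := hδ (lt_of_le_of_lt hz (by rw [hrdef]; linarith))
    have h1' : ‖(B z - B x₀) u u‖ ≤ ‖(B z - B x₀) u‖ * ‖u‖ := ContinuousLinearMap.le_opNorm _ u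
    have h2' : ‖(B z - B x₀) u‖ ≤ ‖B z - B x₀‖ * ‖u‖ := ContinuousLinearMap.le_opNorm _ u
    rw [hu, mul_one] at h1' h2'
    have heq : (B z - B x₀) u u = B z u u - B x₀ u u := by simp
    have h4' : |B z u u - B x₀ u u| < lam/2 := by
      have h5' : |B z u u - B x₀ u u| ≤ ‖B z - B x₀‖ := by
        rw [← heq]
        calc |(B z - B x₀) u u| = ‖(B z - B x₀) u u‖ := (Real.norm_eq_abs _).symm
          _ ≤ ‖(B z - B x₀) u‖ := h1'
          _ ≤ ‖B z - B x₀‖ := h2'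
      calc |B z u u - B x₀ u u| ≤ ‖B z - B x₀‖ := h5'
        _ = dist (B z) (B x₀) := (dist_eq_norm (B z) (B x₀)).symm
        _ < lam/2 := hdz
    have h6' := abs_lt.mp h4'
    have h7' := hmin u hu
    linarith [h6'.1]
  -- growth along unit directions
  have hgrow : ∀ u : EuclideanSpace ℝ (Fin n), ‖u‖ = 1 → ∀ t : ℝ, r ≤ t →
      F₁ x₀ + t * ℓ u + (lam*r/8) * t ≤ F₁ (x₀ + t • u) := by
    intro u hu t ht
    have htpos : 0 < t := lt_of_lt_of_le hrpos ht
    have hφd : ∀ s : ℝ, HasDerivAt (fun s' : ℝ => fderiv ℝ F₁ (x₀ + s' • u) u)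
        (B (x₀ + s • u) u u) s := fun s => hasDerivAt_dirDeriv F₁ h1 x₀ u u s
    set φ : ℝ → ℝ := fun s => fderiv ℝ F₁ (x₀ + s • u) u with hφdef
    have hhd : ∀ s : ℝ, HasDerivAt (fun s' : ℝ => F₁ (x₀ + s' • u)) (φ s) s :=
      fun s => hasDerivAt_line F₁ hd1 x₀ u s
    set h : ℝ → ℝ := fun s => F₁ (x₀ + s • u) with hhdef
    have hconv : ConvexOn ℝ Set.univ h := line_convex F₁ hc1 x₀ u
    have hφ0 : φ 0 = ℓ u := by simp [hφdef, hℓdef]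
    have hh0 : h 0 = F₁ x₀ := by simp [hhdef]
    -- on [0, r] the derivative of φ is at least lam/2
    have hψmono : MonotoneOn (fun s => φ s - lam/2 * s) (Set.Icc (0:ℝ) r) := by
      have hψd : ∀ s : ℝ, HasDerivAt (fun s' => φ s' - lam/2 * s')
          (B (x₀ + s • u) u u - lam/2) s := fun s =>
        (hφd s).sub (by simpa using (hasDerivAt_id s).const_mul (lam/2))
      have hψdiff : Differentiable ℝ (fun s' => φ s' - lam/2 * s') :=
        fun s => (hψd s).differentiableAt
      apply monotoneOn_of_deriv_nonneg (convex_Icc 0 r) hψdiff.continuous.continuousOn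
        (fun s _ => (hψdiff s).differentiableWithinAt)
      intro s hs
      rw [interior_Icc] at hs
      rw [(hψd s).deriv]
      have hdist : dist (x₀ + s • u) x₀ ≤ r := by
        rw [dist_eq_norm]
        have heq2 : x₀ + s • u - x₀ = s • u := by abel
        rw [heq2, norm_smul, hu, mul_one, Real.norm_eq_abs, abs_of_nonneg hs.1.le]
        exact hs.2.le
      have := hball _ hdist u hu
      linarith
    have h0mem : (0:ℝ) ∈ Set.Icc (0:ℝ) r := ⟨le_refl 0, hrpos.le⟩
    have hr2mem : (r/2) ∈ Set.Icc (0:ℝ) r := ⟨by linarith, by linarith⟩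
    have hψ0r := hψmono h0mem hr2mem (by linarith)
    simp only [mul_zero, sub_zero] at hψ0r
    have hψ0r' : φ 0 + lam/2 * (r/2) ≤ φ (r/2) := by linarith
    have hs1 := hconv.le_slope_of_hasDerivAt (Set.mem_univ 0) (Set.mem_univ (r/2))
      (by linarith) (hhd 0)
    have hs2 := hconv.le_slope_of_hasDerivAt (Set.mem_univ (r/2)) (Set.mem_univ r)
      (by linarith) (hhd (r/2))
    rw [slope_def_field] at hs1 hs2
    rw [sub_zero] at hs1
    have e1 : h 0 + (r/2) * φ 0 ≤ h (r/2) := by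
      have h' := (le_div_iff₀ (show (0:ℝ) < r/2 by linarith)).mp hs1
      rw [mul_comm] at h'
      linarith
    have e2 : h (r/2) + (r - r/2) * φ (r/2) ≤ h r := by
      have h' := (le_div_iff₀ (show (0:ℝ) < r - r/2 by linarith)).mp hs2
      rw [mul_comm] at h'
      linarith
    have e2b : (r/2) * (φ 0 + lam/2 * (r/2)) ≤ (r/2) * φ (r/2) :=
      mul_le_mul_of_nonneg_left hψ0r' (by linarith)
    have e3 : h 0 + r * φ 0 + lam*r/8 * r ≤ h r := by nlinarith [e1, e2, e2b]
    -- slope monotonicity from 0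
    have hsm := hconv.slope_mono (Set.mem_univ (0:ℝ))
    have hmem_r : r ∈ Set.univ \ {(0:ℝ)} := ⟨trivial, by simp; linarith⟩
    have hmem_t : t ∈ Set.univ \ {(0:ℝ)} := ⟨trivial, by simp; linarith⟩
    have hslope := hsm hmem_r hmem_t ht
    simp only [slope_def_field, sub_zero] at hslope
    have h8 : φ 0 + lam*r/8 ≤ (h r - h 0)/r := by
      rw [le_div_iff₀ hrpos, add_mul]
      nlinarith [e3]
    have h9 : (φ 0 + lam*r/8) * t ≤ h t - h 0 := by
      have h10 := le_trans h8 hslope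
      rw [le_div_iff₀ htpos] at h10
      linarith
    have hfin : h 0 + t * φ 0 + lam*r/8 * t ≤ h t := by nlinarith [h9]
    rw [hh0, hφ0] at hfin
    exact hfin
  -- global lower bound for F₂ - ℓ
  set c := lam*r/8 with hcdef
  have hcpos : 0 < c := by positivity
  have hglob : ∀ x : EuclideanSpace ℝ (Fin n),
      F₁ x₀ - ℓ x₀ - c*r + c * ‖x - x₀‖ ≤ F₂ x - ℓ x := by
    intro x
    have htan : F₁ x₀ + ℓ (x - x₀) ≤ F₁ x := tangent_le F₁ h1 hc1 x₀ x
    have hℓsub : ℓ (x - x₀) = ℓ x - ℓ x₀ := map_sub ℓ x x₀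
    rcases le_or_gt (‖x - x₀‖) r with hxr | hxr
    · have h11 := hle x
      have h12 := mul_le_mul_of_nonneg_left hxr hcpos.le
      rw [hℓsub] at htan
      linarith
    · have htpos : (0:ℝ) < ‖x - x₀‖ := by linarith
      set t := ‖x - x₀‖ with htdef
      set u := t⁻¹ • (x - x₀) with hudef
      have hunorm : ‖u‖ = 1 := by
        rw [hudef, norm_smul, Real.norm_eq_abs, abs_of_pos (inv_pos.mpr htpos), ← htdef]
        field_simp
      have hxu : x₀ + t • u = x := by
        rw [hudef, smul_smul, mul_inv_cancel₀ (ne_of_gt htpos), one_smul]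
        abel
      have hkey := hgrow u hunorm t hxr.le
      rw [hxu] at hkey
      have hℓu : t * ℓ u = ℓ x - ℓ x₀ := by
        rw [hudef, ℓ.map_smul, smul_eq_mul, ← mul_assoc, mul_inv_cancel₀ (ne_of_gt htpos),
          one_mul, hℓsub]
      rw [hℓu] at hkey
      have h12 := hle x
      linarith [mul_pos hcpos hrpos]
  -- coercivity of F₂ - ℓ
  have hcoer : Tendsto (fun x : EuclideanSpace ℝ (Fin n) => F₂ x - ℓ x)
      (cocompact (EuclideanSpace ℝ (Fin n))) atTop := by
    have hnorm : Tendsto (fun x : EuclideanSpace ℝ (Fin n) => ‖x - x₀‖)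
        (cocompact (EuclideanSpace ℝ (Fin n))) atTop := by
      have hb : Tendsto (fun x : EuclideanSpace ℝ (Fin n) => ‖x‖ + (-‖x₀‖))
          (cocompact (EuclideanSpace ℝ (Fin n))) atTop :=
        tendsto_atTop_add_const_right _ _ tendsto_norm_cocompact_atTop
      refine tendsto_atTop_mono (fun x => ?_) hb
      have := norm_sub_norm_le x x₀
      linarith
    have hL : Tendsto (fun x : EuclideanSpace ℝ (Fin n) => (F₁ x₀ - ℓ x₀ - c*r) + c * ‖x - x₀‖)
        (cocompact (EuclideanSpace ℝ (Fin n))) atTop :=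
      tendsto_atTop_add_const_left _ _ (hnorm.const_mul_atTop hcpos)
    exact tendsto_atTop_mono (fun x => hglob x) hL
  -- minimum exists
  have hcont : Continuous fun x : EuclideanSpace ℝ (Fin n) => F₂ x - ℓ x :=
    (h2.continuous).sub ℓ.continuous
  obtain ⟨y, hy⟩ := hcont.exists_forall_le hcoer
  refine ⟨y, ?_⟩
  have hloc : IsLocalMin (fun x : EuclideanSpace ℝ (Fin n) => F₂ x - ℓ x) y :=
    Filter.Eventually.of_forall hy
  have hzero := hloc.fderiv_eq_zero
  have hfd : fderiv ℝ (fun x : EuclideanSpace ℝ (Fin n) => F₂ x - ℓ x) y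
      = fderiv ℝ F₂ y - ℓ := by
    rw [fderiv_fun_sub (h2.differentiable (by norm_num) y) ℓ.differentiableAt,
      ContinuousLinearMap.fderiv]
  rw [hfd] at hzero
  exact sub_eq_zero.mp hzero

end TotalMAAux

open TotalMAAux

/-- If `F₁, F₂ : ℝⁿ → ℝ` are C² convex functions with `F₂(x) → +∞` as
`‖x‖ → +∞` and `F₁ ≤ F₂`, then `∫ det(D²F₁) ≤ ∫ det(D²F₂)` (integrals with respect to
Lebesgue measure, with values in `[0, +∞]`). -/
theorem total_monge_ampere_mass_comparison
    (n : ℕ) (F₁ F₂ : EuclideanSpace ℝ (Fin n) → ℝ)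
    (h1 : ContDiff ℝ 2 F₁) (h2 : ContDiff ℝ 2 F₂)
    (hc1 : ConvexOn ℝ Set.univ F₁) (hc2 : ConvexOn ℝ Set.univ F₂)
    (hinf : Tendsto F₂ (cocompact (EuclideanSpace ℝ (Fin n))) atTop)
    (hle : ∀ x, F₁ x ≤ F₂ x) :
    ∫⁻ x, ENNReal.ofReal
        (Matrix.det (Matrix.of fun i j =>
          iteratedFDeriv ℝ 2 F₁ x ![EuclideanSpace.single i 1, EuclideanSpace.single j 1]))
      ≤ ∫⁻ x, ENNReal.ofReal
        (Matrix.det (Matrix.of fun i j =>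
          iteratedFDeriv ℝ 2 F₂ x ![EuclideanSpace.single i 1, EuclideanSpace.single j 1])) := by
  rcases Nat.eq_zero_or_pos n with hn | hn
  · subst hn
    simp [Matrix.det_fin_zero]
  show ∫⁻ x, ENNReal.ofReal ((Mmat F₁ x).det) ≤ ∫⁻ x, ENNReal.ofReal ((Mmat F₂ x).det)
  set S := {x : EuclideanSpace ℝ (Fin n) | 0 < (Mmat F₁ x).det} with hSdef
  have hSopen : IsOpen S := isOpen_lt continuous_const (Mmat_det_continuous F₁ h1)
  have hSm : MeasurableSet S := hSopen.measurableSet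
  have step1 : ∫⁻ x, ENNReal.ofReal ((Mmat F₁ x).det)
      = ∫⁻ x in S, ENNReal.ofReal ((Mmat F₁ x).det) := by
    rw [← lintegral_add_compl (fun x => ENNReal.ofReal ((Mmat F₁ x).det)) hSm]
    have h0 : ∫⁻ x in Sᶜ, ENNReal.ofReal ((Mmat F₁ x).det) = ∫⁻ _ in Sᶜ, (0:ENNReal) :=
      setLIntegral_congr_fun hSm.compl (fun x hx =>
        ENNReal.ofReal_eq_zero.mpr (le_of_not_gt hx))
    rw [h0]
    simp
  have step2 : ∫⁻ x in S, ENNReal.ofReal ((Mmat F₁ x).det)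
      = ∫⁻ x in S, ENNReal.ofReal |(gradDeriv F₁ x).det| :=
    lintegral_congr fun x => by
      rw [gradDeriv_det, abs_of_nonneg (Mmat_det_nonneg F₁ h1 hc1 x)]
  have step3 : ∫⁻ x in S, ENNReal.ofReal |(gradDeriv F₁ x).det|
      = volume (gradMap F₁ '' S) :=
    lintegral_abs_det_fderiv_eq_addHaar_image volume hSm
      (fun x _ => (gradMap_hasFDerivAt F₁ h1 x).hasFDerivWithinAt) (grad_injOn F₁ h1 hc1)
  have step4 : gradMap F₁ '' S ⊆ Set.range (gradMap F₂) := by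
    rintro p ⟨x₀, hx₀, rfl⟩
    obtain ⟨y, hy⟩ := reach hn F₁ F₂ h1 h2 hc1 hle x₀ hx₀
    exact ⟨y, by rw [gradMap, gradMap, hy]⟩
  have step5 : volume (Set.range (gradMap F₂)) ≤ ∫⁻ x, ENNReal.ofReal ((Mmat F₂ x).det) := by
    have h := addHaar_image_le_lintegral_abs_det_fderiv volume MeasurableSet.univ
      (fun x (_ : x ∈ Set.univ) => (gradMap_hasFDerivAt F₂ h2 x).hasFDerivWithinAt)
    rw [Set.image_univ, setLIntegral_univ] at h
    calc volume (Set.range (gradMap F₂))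
        ≤ ∫⁻ x, ENNReal.ofReal |(gradDeriv F₂ x).det| := h
      _ = ∫⁻ x, ENNReal.ofReal ((Mmat F₂ x).det) := lintegral_congr fun x => by
          rw [gradDeriv_det, abs_of_nonneg (Mmat_det_nonneg F₂ h2 hc2 x)]
  calc ∫⁻ x, ENNReal.ofReal ((Mmat F₁ x).det)
      = volume (gradMap F₁ '' S) := by rw [step1, step2, step3]
    _ ≤ volume (Set.range (gradMap F₂)) := measure_mono step4
    _ ≤ ∫⁻ x, ENNReal.ofReal ((Mmat F₂ x).det) := step5
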